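/- Let G be a DAG and let (𝒢,s,t,d) be its flow reduction (each vertex v split into v^in, v^out with a demand-1 edge, plus edges (s,v^in), (v^out,t) of demand 0 and (u^out,v^in) of demand 0 for each edge (u,v) of G). Then for every path cover 𝒫 of G of size ℓ there is a flow of (𝒢,s,t,d) of size ℓ, and conversely every flow of size ℓ yields a path cover of G of size ℓ. In particular, the width of G equals the minimum flow size of (𝒢,s,t,d). -/

import Mathlib

open Finset

section Prelude

variable {V : Type*}

/-- A (directed) path in the graph with edge relation `E`: nonempty, consecutive
vertices joined by edges, and vertices pairwise distinct. -/
def IsPathOn (E : V → V → Prop) (p : List V) : Prop :=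
  p ≠ [] ∧ p.Chain' E ∧ p.Nodup

/-- Reachability in the graph with edge relation `E`. -/
def Reaches (E : V → V → Prop) : V → V → Prop := Relation.ReflTransGen E

/-- The edges of a path, as the list of consecutive pairs of vertices. -/
def pathEdges (p : List V) : List (V × V) := p.zip p.tail

/-- A path cover: a multiset of paths such that every vertex is on some path. -/
def IsPathCover (E : V → V → Prop) (P : Multiset (List V)) : Prop :=
  (∀ p ∈ P, IsPathOn E p) ∧ ∀ v : V, ∃ p ∈ P, v ∈ p

/-- The width of a graph: the minimum size of a path cover. -/
noncomputable def gwidth (E : V → V → Prop) : ℕ :=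
  sInf {n | ∃ P : Multiset (List V), IsPathCover E P ∧ Multiset.card P = n}

/-- A DAG: no proper (directed) cycles. -/
def IsDAG (E : V → V → Prop) : Prop := ∀ v, ¬ Relation.TransGen E v v

/-- The edge relation of a finite edge set. -/
def edgeRel (E : Finset (V × V)) : V → V → Prop := fun a b => (a, b) ∈ E

/-- Multiplicity of an edge with respect to a multiset of paths. -/
def mult [DecidableEq V] (P : Multiset (List V)) (e : V × V) : ℕ :=
  Multiset.countP (fun p => e ∈ pathEdges p) P

/-- A flow network: a finite edge set, source, sink, and lower bounds (demands). -/
structure FlowNet (V : Type*) where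
  E : Finset (V × V)
  s : V
  t : V
  d : V × V → ℕ

/-- A flow: supported on edges, satisfying the demands, and flow conservation at
every vertex other than the source and the sink. -/
def IsFlow [Fintype V] (N : FlowNet V) (f : V × V → ℕ) : Prop :=
  (∀ e, e ∉ N.E → f e = 0) ∧ (∀ e ∈ N.E, N.d e ≤ f e) ∧
  ∀ v : V, v ≠ N.s → v ≠ N.t → (∑ u : V, f (u, v)) = ∑ u : V, f (v, u)

/-- The size of a flow: net outflow at the source. -/
def flowSize [Fintype V] (N : FlowNet V) (f : V × V → ℕ) : ℤ :=
  (∑ u : V, (f (N.s, u) : ℤ)) - ∑ u : V, (f (u, N.s) : ℤ)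

/-- An `st`-cut, given by the source side `S` (the sink side is the complement). -/
def IsCut (N : FlowNet V) (S : Set V) : Prop := N.s ∈ S ∧ N.t ∉ S

/-- A one-way cut: a cut with no edge crossing from `T = Sᶜ` to `S`. -/
def IsOwCut (N : FlowNet V) (S : Set V) : Prop :=
  IsCut N S ∧ ∀ e ∈ N.E, e.1 ∉ S → e.2 ∉ S

open Classical in
/-- The demand of a cut: sum of demands of edges crossing from `S` to `T`. -/
noncomputable def cutDemand (N : FlowNet V) (S : Set V) : ℕ :=
  ∑ e ∈ N.E.filter (fun e => e.1 ∈ S ∧ e.2 ∉ S), N.d e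

open Classical in
/-- The net flow across a cut: flow from `S` to `T` minus flow from `T` to `S`. -/
noncomputable def cutFlow (N : FlowNet V) (S : Set V) (f : V × V → ℕ) : ℤ :=
  (∑ e ∈ N.E.filter (fun e => e.1 ∈ S ∧ e.2 ∉ S), (f e : ℤ))
    - ∑ e ∈ N.E.filter (fun e => e.1 ∉ S ∧ e.2 ∈ S), (f e : ℤ)

/-- The residual graph of a network w.r.t. a flow `f`: reverse edges of all edges,
plus the edges whose flow strictly exceeds the demand. -/
def ResidualEdge (N : FlowNet V) (f : V × V → ℕ) (u v : V) : Prop :=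
  (v, u) ∈ N.E ∨ ((u, v) ∈ N.E ∧ N.d (u, v) < f (u, v))

/-- Vertices of the flow reduction: two copies of each vertex, plus source/sink. -/
abbrev FR (V : Type*) := (V ⊕ V) ⊕ Bool

def vinF (v : V) : FR V := Sum.inl (Sum.inl v)
def voutF (v : V) : FR V := Sum.inl (Sum.inr v)
def fsrc : FR V := Sum.inr false
def fsnk : FR V := Sum.inr true

/-- Demands of the flow reduction: `1` on each edge `(vin v, vout v)`, else `0`. -/
def redD [DecidableEq V] : FR V × FR V → ℕ
  | (Sum.inl (Sum.inl a), Sum.inl (Sum.inr b)) => if a = b then 1 else 0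
  | _ => 0

/-- The flow reduction of the DAG with edge set `E`. -/
def redNet [Fintype V] [DecidableEq V] (E : Finset (V × V)) : FlowNet (FR V) where
  E := (univ.image fun v : V => (fsrc, vinF v)) ∪ (univ.image fun v : V => (voutF v, fsnk))
        ∪ (univ.image fun v : V => (vinF v, voutF v))
        ∪ (E.image fun e => (voutF e.1, vinF e.2))
  s := fsrc
  t := fsnk
  d := redD

/-- The layered cut `L^{≤ l}`: the source together with all split vertices of level `≤ l`. -/
def layerCut (ℓ : FR V → ℤ) (l : ℤ) : Set (FR V) :=
  {x | x = fsrc ∨ ((∃ v : V, x = vinF v ∨ x = voutF v) ∧ ℓ x ≤ l)}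

open Classical in
/-- The layered antichain `A^l`. -/
noncomputable def layerAntichain [Fintype V] (ℓ : FR V → ℤ) (l : ℤ) : Finset V :=
  univ.filter (fun v => ℓ (vinF v) ≤ l ∧ l < ℓ (voutF v))

end Prelude
section Aux
variable {V : Type*}

lemma pathEdges_nil : pathEdges ([] : List V) = [] := rfl
lemma pathEdges_single (a : V) : pathEdges [a] = [] := rfl
lemma pathEdges_cons_cons (a b : V) (q : List V) :
    pathEdges (a :: b :: q) = (a, b) :: pathEdges (b :: q) := rfl

lemma mem_pathEdges_mem {p : List V} {u v : V} (h : (u, v) ∈ pathEdges p) :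
    u ∈ p ∧ v ∈ p.tail :=
  List.of_mem_zip h

lemma chain'_of_pathEdges {E : V → V → Prop} {p : List V} (hc : p.Chain' E)
    {u v : V} (h : (u, v) ∈ pathEdges p) : E u v := by
  induction p with
  | nil => simp [pathEdges_nil] at h
  | cons a q ih =>
    cases q with
    | nil => simp [pathEdges_single] at h
    | cons b r =>
      rw [pathEdges_cons_cons] at h
      rw [List.Chain', List.isChain_cons_cons] at hc
      rcases List.mem_cons.1 h with h | h
      · obtain ⟨rfl, rfl⟩ := Prod.mk.inj h
        exact hc.1
      · exact ih hc.2 h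

lemma transGen_of_chain'_aux {E : V → V → Prop} {q : List V} :
    ∀ {a b : V}, (a :: q).Chain' E → b ∈ q → Relation.TransGen E a b := by
  induction q with
  | nil => simp
  | cons c r ih =>
    intro a b hc hb
    rw [List.Chain', List.isChain_cons_cons] at hc
    rcases List.mem_cons.1 hb with rfl | hb
    · exact Relation.TransGen.single hc.1
    · exact (Relation.TransGen.single hc.1).trans (ih hc.2 hb)

lemma transGen_of_chain' {E : V → V → Prop} {p : List V} (hc : p.Chain' E)
    {a : V} {q : List V} (hp : p = a :: q) {b : V} (hb : b ∈ q) :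
    Relation.TransGen E a b :=
  transGen_of_chain'_aux (hp ▸ hc) hb

lemma nodup_of_chain' {E : V → V → Prop} (hdag : IsDAG E) {p : List V}
    (hc : p.Chain' E) : p.Nodup := by
  induction p with
  | nil => simp
  | cons a q ih =>
    rw [List.nodup_cons]
    refine ⟨fun ha => hdag a (transGen_of_chain' hc rfl ha), ih hc.tail⟩

end Aux
section Aux2
variable {V : Type*} [Fintype V] [DecidableEq V]
open Finset

lemma vin_count (p : List V) (hp : p.Nodup) (v : V) :
    (if p.head? = some v then 1 else 0)
      + (univ.filter fun u => (u, v) ∈ pathEdges p).card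
      = if v ∈ p then 1 else 0 := by
  induction p with
  | nil => simp [pathEdges_nil]
  | cons a q ih =>
    cases q with
    | nil => by_cases h : v = a <;> simp [pathEdges_single, h, eq_comm]
    | cons b r =>
      rw [List.nodup_cons] at hp
      rw [pathEdges_cons_cons]
      by_cases hva : v = a
      · subst hva
        have h0 : (univ.filter fun u => (u, v) ∈ (v, b) :: pathEdges (b :: r)) = ∅ := by
          rw [Finset.filter_eq_empty_iff]
          intro u _ hu
          rcases List.mem_cons.1 hu with h | h
          · obtain ⟨rfl, rfl⟩ := Prod.mk.inj h
            exact hp.1 (List.mem_cons_self)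
          · exact hp.1 (List.mem_cons_of_mem _ (mem_pathEdges_mem h).2)
        rw [h0]
        simp
      · by_cases hvb : v = b
        · subst hvb
          have h1 : (univ.filter fun u => (u, v) ∈ (a, v) :: pathEdges (v :: r)) = {a} := by
            ext u
            rw [Finset.mem_filter, Finset.mem_singleton]
            constructor
            · rintro ⟨-, hu⟩
              rcases List.mem_cons.1 hu with h | h
              · exact (Prod.mk.inj h).1
              · exact absurd ((mem_pathEdges_mem h).2)
                  (fun hv => (List.nodup_cons.1 hp.2).1 hv)
            · rintro rfl
              exact ⟨Finset.mem_univ _, List.mem_cons_self⟩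
          rw [h1]
          simp [hva, eq_comm]
        · have h2 : (univ.filter fun u => (u, v) ∈ (a, b) :: pathEdges (b :: r))
              = (univ.filter fun u => (u, v) ∈ pathEdges (b :: r)) := by
            apply Finset.filter_congr
            intro u _
            rw [List.mem_cons]
            constructor
            · rintro (h | h)
              · exact absurd (Prod.mk.inj h).2 hvb
              · exact h
            · exact Or.inr
          have hI := ih hp.2
          rw [h2]
          have hh : ¬ ((b :: r).head? = some v) := by simp [eq_comm, hvb]
          rw [if_neg hh, zero_add] at hI
          rw [hI]
          have : ¬ ((a :: b :: r).head? = some v) := by simp [eq_comm, hva]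
          rw [if_neg this, zero_add]
          simp [List.mem_cons, hva, hvb]

lemma vout_count (p : List V) (hp : p.Nodup) (v : V) :
    (if v ∈ p then 1 else 0)
      = (if p.getLast? = some v then 1 else 0)
        + (univ.filter fun u => (v, u) ∈ pathEdges p).card := by
  induction p with
  | nil => simp [pathEdges_nil]
  | cons a q ih =>
    cases q with
    | nil => by_cases h : v = a <;> simp [pathEdges_single, h, eq_comm]
    | cons b r =>
      rw [List.nodup_cons] at hp
      rw [pathEdges_cons_cons]
      have hlast : (a :: b :: r).getLast? = (b :: r).getLast? := rfl
      by_cases hva : v = a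
      · subst hva
        have hg : ¬ ((b :: r).getLast? = some v) := by
          intro h
          exact hp.1 (List.mem_of_getLast? h)
        have h1 : (univ.filter fun u => (v, u) ∈ (v, b) :: pathEdges (b :: r)) = {b} := by
          ext u
          rw [Finset.mem_filter, Finset.mem_singleton]
          constructor
          · rintro ⟨-, hu⟩
            rcases List.mem_cons.1 hu with h | h
            · exact (Prod.mk.inj h).2
            · exact absurd (mem_pathEdges_mem h).1 hp.1
          · rintro rfl
            exact ⟨Finset.mem_univ _, List.mem_cons_self⟩
        rw [hlast, h1, if_neg hg]
        simp
      · have h2 : (univ.filter fun u => (v, u) ∈ (a, b) :: pathEdges (b :: r))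
            = (univ.filter fun u => (v, u) ∈ pathEdges (b :: r)) := by
          apply Finset.filter_congr
          intro u _
          rw [List.mem_cons]
          constructor
          · rintro (h | h)
            · exact absurd (Prod.mk.inj h).1 hva
            · exact h
          · exact Or.inr
        rw [hlast, h2, ← ih hp.2]
        simp [List.mem_cons, hva]

lemma head_count (p : List V) (hp : p ≠ []) :
    (∑ v : V, if p.head? = some v then 1 else 0) = 1 := by
  cases p with
  | nil => exact absurd rfl hp
  | cons a q =>
    have : ∀ v : V, ((a :: q).head? = some v) = (a = v) := by simp [List.head?_cons, eq_comm]
    simp only [this]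
    rw [Finset.sum_ite_eq univ a (fun _ => 1)]
    simp

end Aux2
set_option linter.unusedSectionVars false
section Aux3
variable {V : Type*} [Fintype V] [DecidableEq V]
open Finset

/-- The canonical flow associated to a multiset of paths. -/
def pathFlow (P : Multiset (List V)) : FR V × FR V → ℕ
  | (Sum.inr false, Sum.inl (Sum.inl v)) => P.countP (fun p => p.head? = some v)
  | (Sum.inl (Sum.inl a), Sum.inl (Sum.inr b)) =>
      if a = b then P.countP (fun p => a ∈ p) else 0
  | (Sum.inl (Sum.inr a), Sum.inl (Sum.inl b)) => P.countP (fun p => (a, b) ∈ pathEdges p)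
  | (Sum.inl (Sum.inr v), Sum.inr true) => P.countP (fun p => p.getLast? = some v)
  | _ => 0

@[simp] lemma pathFlow_s_vin (P : Multiset (List V)) (v : V) :
    pathFlow P (fsrc, vinF v) = P.countP (fun p => p.head? = some v) := rfl
@[simp] lemma pathFlow_vin_vout (P : Multiset (List V)) (a b : V) :
    pathFlow P (vinF a, voutF b) = if a = b then P.countP (fun p => a ∈ p) else 0 := rfl
@[simp] lemma pathFlow_vout_vin (P : Multiset (List V)) (a b : V) :
    pathFlow P (voutF a, vinF b) = P.countP (fun p => (a, b) ∈ pathEdges p) := rfl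
@[simp] lemma pathFlow_vout_t (P : Multiset (List V)) (v : V) :
    pathFlow P (voutF v, fsnk) = P.countP (fun p => p.getLast? = some v) := rfl
@[simp] lemma pathFlow_vin_vin (P : Multiset (List V)) (a b : V) :
    pathFlow P (vinF a, vinF b) = 0 := rfl
@[simp] lemma pathFlow_vout_vout (P : Multiset (List V)) (a b : V) :
    pathFlow P (voutF a, voutF b) = 0 := rfl
@[simp] lemma pathFlow_vin_s (P : Multiset (List V)) (a : V) :
    pathFlow P (vinF a, fsrc) = 0 := rfl
@[simp] lemma pathFlow_vin_t (P : Multiset (List V)) (a : V) :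
    pathFlow P (vinF a, fsnk) = 0 := rfl
@[simp] lemma pathFlow_vout_s (P : Multiset (List V)) (a : V) :
    pathFlow P (voutF a, fsrc) = 0 := rfl
@[simp] lemma pathFlow_s_vout (P : Multiset (List V)) (a : V) :
    pathFlow P (fsrc, voutF a) = 0 := rfl
@[simp] lemma pathFlow_t_vin (P : Multiset (List V)) (a : V) :
    pathFlow P (fsnk, vinF a) = 0 := rfl
@[simp] lemma pathFlow_t_vout (P : Multiset (List V)) (a : V) :
    pathFlow P (fsnk, voutF a) = 0 := rfl
@[simp] lemma pathFlow_ss (P : Multiset (List V)) : pathFlow P (fsrc, fsrc) = 0 := rfl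
@[simp] lemma pathFlow_st (P : Multiset (List V)) : pathFlow P (fsrc, fsnk) = 0 := rfl
@[simp] lemma pathFlow_ts (P : Multiset (List V)) : pathFlow P (fsnk, fsrc) = 0 := rfl
@[simp] lemma pathFlow_tt (P : Multiset (List V)) : pathFlow P (fsnk, fsnk) = 0 := rfl

lemma sumFR (g : FR V → ℕ) :
    ∑ x : FR V, g x = (∑ v : V, g (vinF v)) + (∑ v : V, g (voutF v)) + g fsrc + g fsnk := by
  rw [Fintype.sum_sum_type, Fintype.sum_sum_type, Fintype.sum_bool]
  simp [vinF, voutF, fsrc, fsnk]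
  ring

lemma mem_redE {E : Finset (V × V)} {e : FR V × FR V} :
    e ∈ (redNet E).E ↔ (∃ v : V, e = (fsrc, vinF v)) ∨ (∃ v : V, e = (voutF v, fsnk)) ∨
      (∃ v : V, e = (vinF v, voutF v)) ∨
      (∃ a b : V, (a, b) ∈ E ∧ e = (voutF a, vinF b)) := by
  simp only [redNet, Finset.mem_union, Finset.mem_image, Finset.mem_univ, true_and]
  constructor
  · rintro (((⟨v, h⟩ | ⟨v, h⟩) | ⟨v, h⟩) | ⟨⟨a, b⟩, hab, h⟩)
    · exact Or.inl ⟨v, h.symm⟩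
    · exact Or.inr (Or.inl ⟨v, h.symm⟩)
    · exact Or.inr (Or.inr (Or.inl ⟨v, h.symm⟩))
    · exact Or.inr (Or.inr (Or.inr ⟨a, b, hab, h.symm⟩))
  · rintro (⟨v, rfl⟩ | ⟨v, rfl⟩ | ⟨v, rfl⟩ | ⟨a, b, hab, rfl⟩)
    · exact Or.inl (Or.inl (Or.inl ⟨v, rfl⟩))
    · exact Or.inl (Or.inl (Or.inr ⟨v, rfl⟩))
    · exact Or.inl (Or.inr ⟨v, rfl⟩)
    · exact Or.inr ⟨(a, b), hab, rfl⟩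

lemma s_vin_mem {E : Finset (V × V)} (v : V) : (fsrc, vinF v) ∈ (redNet E).E :=
  mem_redE.2 (Or.inl ⟨v, rfl⟩)
lemma vout_t_mem {E : Finset (V × V)} (v : V) : (voutF v, fsnk) ∈ (redNet E).E :=
  mem_redE.2 (Or.inr (Or.inl ⟨v, rfl⟩))
lemma vin_vout_mem {E : Finset (V × V)} (v : V) : (vinF v, voutF v) ∈ (redNet E).E :=
  mem_redE.2 (Or.inr (Or.inr (Or.inl ⟨v, rfl⟩)))
lemma vout_vin_mem {E : Finset (V × V)} {a b : V} (h : (a, b) ∈ E) :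
    (voutF a, vinF b) ∈ (redNet E).E :=
  mem_redE.2 (Or.inr (Or.inr (Or.inr ⟨a, b, h, rfl⟩)))

lemma pathFlow_support {E : Finset (V × V)} (P : Multiset (List V))
    (hP : ∀ p ∈ P, IsPathOn (edgeRel E) p) :
    ∀ e ∉ (redNet E).E, pathFlow P e = 0 := by
  rintro ⟨(a | a) | (_ | _), (b | b) | (_ | _)⟩ he <;> try rfl
  · -- (vinF a, voutF b)
    show (if a = b then P.countP (fun p => a ∈ p) else 0) = 0
    by_cases hab : a = b
    · subst hab
      exact absurd (vin_vout_mem a) he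
    · rw [if_neg hab]
  · -- (voutF a, vinF b)
    show P.countP (fun p => (a, b) ∈ pathEdges p) = 0
    rw [Multiset.countP_eq_zero]
    intro p hp hmem
    have : edgeRel E a b := chain'_of_pathEdges (hP p hp).2.1 hmem
    exact absurd (vout_vin_mem this) he
  · exact absurd (vout_t_mem a) he
  · exact absurd (s_vin_mem b) he

end Aux3
section Aux4
set_option linter.unusedSectionVars false
variable {V : Type*} [Fintype V] [DecidableEq V]
open Finset

lemma sum_ite_card (g : V → Prop) [DecidablePred g] :
    (∑ u : V, if g u then 1 else 0) = (univ.filter g).card :=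
  (Finset.card_filter g univ).symm

lemma conserv_in (P : Multiset (List V)) (hP : ∀ p ∈ P, p.Nodup) (v : V) :
    P.countP (fun p => p.head? = some v)
      + (∑ u : V, P.countP (fun p => (u, v) ∈ pathEdges p))
      = P.countP (fun p => v ∈ p) := by
  induction P using Multiset.induction_on with
  | empty => simp
  | cons p P ih =>
    have hp := hP p (Multiset.mem_cons_self p P)
    have ih' := ih (fun q hq => hP q (Multiset.mem_cons_of_mem hq))
    simp only [Multiset.countP_cons, Finset.sum_add_distrib]
    have key := vin_count p hp v
    rw [Finset.card_filter] at key
    omega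

lemma conserv_out (P : Multiset (List V)) (hP : ∀ p ∈ P, p.Nodup) (v : V) :
    P.countP (fun p => v ∈ p)
      = P.countP (fun p => p.getLast? = some v)
        + ∑ u : V, P.countP (fun p => (v, u) ∈ pathEdges p) := by
  induction P using Multiset.induction_on with
  | empty => simp
  | cons p P ih =>
    have hp := hP p (Multiset.mem_cons_self p P)
    have ih' := ih (fun q hq => hP q (Multiset.mem_cons_of_mem hq))
    simp only [Multiset.countP_cons, Finset.sum_add_distrib]
    have key := vout_count p hp v
    rw [Finset.card_filter] at key
    omega

lemma sum_countP_head (P : Multiset (List V)) (hP : ∀ p ∈ P, p ≠ []) :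
    (∑ v : V, P.countP (fun p => p.head? = some v)) = Multiset.card P := by
  induction P using Multiset.induction_on with
  | empty => simp
  | cons p P ih =>
    have hp := hP p (Multiset.mem_cons_self p P)
    have ih' := ih (fun q hq => hP q (Multiset.mem_cons_of_mem hq))
    simp only [Multiset.countP_cons, Finset.sum_add_distrib, Multiset.card_cons, ih']
    rw [head_count p hp]

lemma pathFlow_conserv (P : Multiset (List V)) (hP : ∀ p ∈ P, p.Nodup) :
    ∀ x : FR V, x ≠ fsrc → x ≠ fsnk →
      (∑ u : FR V, pathFlow P (u, x)) = ∑ u : FR V, pathFlow P (x, u) := by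
  rintro ((v | v) | (_ | _)) hs ht
  · show (∑ u : FR V, pathFlow P (u, vinF v)) = ∑ u : FR V, pathFlow P (vinF v, u)
    rw [sumFR (fun u => pathFlow P (u, vinF v)), sumFR (fun u => pathFlow P (vinF v, u))]
    simp only [pathFlow_s_vin, pathFlow_vin_vin, pathFlow_vout_vin, pathFlow_vin_vout,
      pathFlow_vin_s, pathFlow_vin_t, pathFlow_t_vin, Finset.sum_const_zero, zero_add, add_zero]
    rw [Finset.sum_ite_eq univ v (fun _ => P.countP (fun p => v ∈ p))]
    simp only [Finset.mem_univ, if_true]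
    rw [add_comm]
    exact conserv_in P hP v
  · show (∑ u : FR V, pathFlow P (u, voutF v)) = ∑ u : FR V, pathFlow P (voutF v, u)
    rw [sumFR (fun u => pathFlow P (u, voutF v)), sumFR (fun u => pathFlow P (voutF v, u))]
    simp only [pathFlow_vin_vout, pathFlow_vout_vout, pathFlow_vout_vin, pathFlow_vout_t,
      pathFlow_vout_s, pathFlow_s_vout, pathFlow_t_vout, Finset.sum_const_zero, zero_add, add_zero]
    have : (∑ a : V, if a = v then P.countP (fun p => a ∈ p) else 0)
        = P.countP (fun p => v ∈ p) := by
      rw [Finset.sum_ite_eq' univ v (fun a => P.countP (fun p => a ∈ p))]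
      simp
    rw [this]
    rw [add_comm]
    exact conserv_out P hP v
  · exact absurd rfl hs
  · exact absurd rfl ht

lemma flowSize_pathFlow {E : Finset (V × V)} (P : Multiset (List V))
    (hP : ∀ p ∈ P, p ≠ []) :
    flowSize (redNet E) (pathFlow P) = Multiset.card P := by
  have h2 : ∀ u : FR V, pathFlow P (u, fsrc) = 0 := by
    rintro ((a | a) | (_ | _)) <;> rfl
  have h1 : (∑ u : FR V, pathFlow P (fsrc, u)) = Multiset.card P := by
    rw [sumFR (fun u => pathFlow P (fsrc, u))]
    simp only [pathFlow_s_vin, pathFlow_s_vout, pathFlow_ss, pathFlow_st,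
      Finset.sum_const_zero, add_zero]
    exact sum_countP_head P hP
  show ((∑ u : FR V, (pathFlow P (fsrc, u) : ℤ)) - ∑ u : FR V, (pathFlow P (u, fsrc) : ℤ))
      = Multiset.card P
  simp only [h2, Nat.cast_zero, Finset.sum_const_zero, sub_zero]
  rw [← Nat.cast_sum]
  rw [h1]

end Aux4
section Aux5
set_option linter.unusedSectionVars false
variable {V : Type*} [Fintype V] [DecidableEq V] {E : Finset (V × V)}
open Finset

@[simp] lemma vin_vin_not_mem (a b : V) : (vinF a, vinF b) ∉ (redNet E).E := by
  simp [mem_redE, vinF, voutF, fsrc, fsnk, Prod.ext_iff]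
@[simp] lemma vout_vout_not_mem (a b : V) : (voutF a, voutF b) ∉ (redNet E).E := by
  simp [mem_redE, vinF, voutF, fsrc, fsnk, Prod.ext_iff]
@[simp] lemma t_vin_not_mem (b : V) : ((fsnk : FR V), vinF b) ∉ (redNet E).E := by
  simp [mem_redE, vinF, voutF, fsrc, fsnk, Prod.ext_iff]
@[simp] lemma t_vout_not_mem (b : V) : ((fsnk : FR V), voutF b) ∉ (redNet E).E := by
  simp [mem_redE, vinF, voutF, fsrc, fsnk, Prod.ext_iff]
@[simp] lemma s_vout_not_mem (b : V) : ((fsrc : FR V), voutF b) ∉ (redNet E).E := by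
  simp [mem_redE, vinF, voutF, fsrc, fsnk, Prod.ext_iff]
@[simp] lemma vin_s_not_mem (a : V) : (vinF a, (fsrc : FR V)) ∉ (redNet E).E := by
  simp [mem_redE, vinF, voutF, fsrc, fsnk, Prod.ext_iff]
@[simp] lemma vin_t_not_mem (a : V) : (vinF a, (fsnk : FR V)) ∉ (redNet E).E := by
  simp [mem_redE, vinF, voutF, fsrc, fsnk, Prod.ext_iff]
@[simp] lemma vout_s_not_mem (a : V) : (voutF a, (fsrc : FR V)) ∉ (redNet E).E := by
  simp [mem_redE, vinF, voutF, fsrc, fsnk, Prod.ext_iff]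
@[simp] lemma ss_not_mem : ((fsrc : FR V), (fsrc : FR V)) ∉ (redNet E).E := by
  simp [mem_redE, vinF, voutF, fsrc, fsnk, Prod.ext_iff]
@[simp] lemma st_not_mem : ((fsrc : FR V), (fsnk : FR V)) ∉ (redNet E).E := by
  simp [mem_redE, vinF, voutF, fsrc, fsnk, Prod.ext_iff]
@[simp] lemma ts_not_mem : ((fsnk : FR V), (fsrc : FR V)) ∉ (redNet E).E := by
  simp [mem_redE, vinF, voutF, fsrc, fsnk, Prod.ext_iff]
@[simp] lemma tt_not_mem : ((fsnk : FR V), (fsnk : FR V)) ∉ (redNet E).E := by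
  simp [mem_redE, vinF, voutF, fsrc, fsnk, Prod.ext_iff]

lemma vin_vout_mem_eq {a b : V} (h : (vinF a, voutF b) ∈ (redNet E).E) : a = b := by
  rcases mem_redE.1 h with ⟨v, hv⟩ | ⟨v, hv⟩ | ⟨v, hv⟩ | ⟨x, y, -, hv⟩ <;>
    simp [vinF, voutF, fsrc, fsnk, Prod.ext_iff] at hv
  exact hv.1.trans hv.2.symm

lemma vout_vin_mem_E {a b : V} (h : (voutF a, vinF b) ∈ (redNet E).E) : (a, b) ∈ E := by
  rcases mem_redE.1 h with ⟨v, hv⟩ | ⟨v, hv⟩ | ⟨v, hv⟩ | ⟨x, y, hxy, hv⟩ <;>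
    simp [vinF, voutF, fsrc, fsnk, Prod.ext_iff] at hv
  obtain ⟨rfl, rfl⟩ := hv
  exact hxy

section FlowComp
variable {f : FR V × FR V → ℕ} (hsupp : ∀ e ∉ (redNet E).E, f e = 0)
include hsupp

lemma inflow_vin (v : V) :
    (∑ u : FR V, f (u, vinF v)) = f (fsrc, vinF v) + ∑ u : V, f (voutF u, vinF v) := by
  rw [sumFR (fun u => f (u, vinF v))]
  rw [Finset.sum_eq_zero (fun u _ => hsupp _ (vin_vin_not_mem u v)),
    hsupp _ (t_vin_not_mem v)]
  ring

lemma outflow_vin (v : V) : (∑ u : FR V, f (vinF v, u)) = f (vinF v, voutF v) := by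
  rw [sumFR (fun u => f (vinF v, u))]
  rw [Finset.sum_eq_zero (fun u _ => hsupp _ (vin_vin_not_mem v u)),
    hsupp _ (vin_s_not_mem v), hsupp _ (vin_t_not_mem v)]
  have : (∑ u : V, f (vinF v, voutF u)) = f (vinF v, voutF v) := by
    rw [Finset.sum_eq_single v]
    · intro b _ hb
      refine hsupp _ (fun hmem => hb ?_)
      exact (vin_vout_mem_eq hmem).symm
    · intro h; exact absurd (Finset.mem_univ v) h
  rw [this]
  ring

lemma inflow_vout (v : V) : (∑ u : FR V, f (u, voutF v)) = f (vinF v, voutF v) := by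
  rw [sumFR (fun u => f (u, voutF v))]
  rw [Finset.sum_eq_zero (fun u _ => hsupp _ (vout_vout_not_mem u v)),
    hsupp _ (s_vout_not_mem v), hsupp _ (t_vout_not_mem v)]
  have : (∑ u : V, f (vinF u, voutF v)) = f (vinF v, voutF v) := by
    rw [Finset.sum_eq_single v]
    · intro b _ hb
      refine hsupp _ (fun hmem => hb ?_)
      exact vin_vout_mem_eq hmem
    · intro h; exact absurd (Finset.mem_univ v) h
  rw [this]
  ring

lemma outflow_vout (v : V) :
    (∑ u : FR V, f (voutF v, u)) = f (voutF v, fsnk) + ∑ u : V, f (voutF v, vinF u) := by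
  rw [sumFR (fun u => f (voutF v, u))]
  rw [Finset.sum_eq_zero (fun u _ => hsupp _ (vout_vout_not_mem v u)),
    hsupp _ (vout_s_not_mem v)]
  ring

lemma outflow_s : (∑ u : FR V, f (fsrc, u)) = ∑ u : V, f (fsrc, vinF u) := by
  rw [sumFR (fun u => f (fsrc, u))]
  rw [Finset.sum_eq_zero (fun u _ => hsupp _ (s_vout_not_mem u)),
    hsupp _ ss_not_mem, hsupp _ st_not_mem]
  ring

lemma inflow_s : (∑ u : FR V, f (u, fsrc)) = 0 := by
  rw [sumFR (fun u => f (u, fsrc))]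
  rw [Finset.sum_eq_zero (fun u _ => hsupp _ (vin_s_not_mem u)),
    Finset.sum_eq_zero (fun u _ => hsupp _ (vout_s_not_mem u)),
    hsupp _ ss_not_mem, hsupp _ ts_not_mem]
  ring

lemma fzero_vout_vin {a b : V} (hab : (a, b) ∉ E) : f (voutF a, vinF b) = 0 :=
  hsupp _ (fun hmem => hab (vout_vin_mem_E hmem))

end FlowComp
end Aux5
section Aux6
set_option linter.unusedSectionVars false
variable {V : Type*} [Fintype V] [DecidableEq V] {E : Finset (V × V)}
open Finset

lemma wf_of_dag (hdag : IsDAG (edgeRel E)) : WellFounded (edgeRel E) := by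
  have : IsTrans V (Relation.TransGen (edgeRel E)) := ⟨fun _ _ _ => Relation.TransGen.trans⟩
  have : IsIrrefl V (Relation.TransGen (edgeRel E)) := ⟨hdag⟩
  exact Subrelation.wf (fun h => Relation.TransGen.single h)
    (Finite.wellFounded_of_trans_of_irrefl _)

lemma wf_of_dag' (hdag : IsDAG (edgeRel E)) : WellFounded (Function.swap (edgeRel E)) := by
  have : IsTrans V (Relation.TransGen (Function.swap (edgeRel E))) :=
    ⟨fun _ _ _ => Relation.TransGen.trans⟩
  have : IsIrrefl V (Relation.TransGen (Function.swap (edgeRel E))) :=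
    ⟨fun v hv => hdag v (Relation.transGen_swap.1 hv)⟩
  exact Subrelation.wf (fun h => Relation.TransGen.single h)
    (Finite.wellFounded_of_trans_of_irrefl _)

section ZeroExtract
variable {f : FR V × FR V → ℕ} (hdag : IsDAG (edgeRel E))
  (hsupp : ∀ e ∉ (redNet E).E, f e = 0)
  (hcons : ∀ x : FR V, x ≠ fsrc → x ≠ fsnk → (∑ u : FR V, f (u, x)) = ∑ u : FR V, f (x, u))
include hdag hsupp hcons

lemma vin_vout_pos_of_vout_vin {a b : V} (h : f (voutF a, vinF b) ≠ 0) :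
    f (vinF a, voutF a) ≠ 0 := by
  have hc := hcons (voutF a) (by simp [voutF, fsrc]) (by simp [voutF, fsnk])
  rw [inflow_vout hsupp, outflow_vout hsupp] at hc
  have hle : f (voutF a, vinF b) ≤ ∑ u : V, f (voutF a, vinF u) :=
    Finset.single_le_sum (f := fun u => f (voutF a, vinF u))
      (fun u _ => Nat.zero_le _) (Finset.mem_univ b)
  omega

lemma vin_vout_pos_of_src {v : V} (h : f (fsrc, vinF v) ≠ 0) :
    f (vinF v, voutF v) ≠ 0 := by
  have hc := hcons (vinF v) (by simp [vinF, fsrc]) (by simp [vinF, fsnk])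
  rw [inflow_vin hsupp, outflow_vin hsupp] at hc
  omega

lemma flow_zero (hz : ∀ v : V, f (fsrc, vinF v) = 0) : ∀ e, f e = 0 := by
  have hmid : ∀ v : V, f (vinF v, voutF v) = 0 := by
    intro v
    induction v using (wf_of_dag hdag).induction with
    | _ v ih =>
      by_contra hpos
      have hc := hcons (vinF v) (by simp [vinF, fsrc]) (by simp [vinF, fsnk])
      rw [inflow_vin hsupp, outflow_vin hsupp, hz v, zero_add] at hc
      have : ∃ u ∈ (univ : Finset V), f (voutF u, vinF v) ≠ 0 := by
        by_contra hno
        push_neg at hno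
        rw [Finset.sum_eq_zero (fun u hu => hno u hu)] at hc
        exact hpos hc.symm
      obtain ⟨u, -, hu⟩ := this
      have huv : (u, v) ∈ E := by
        by_contra hne
        exact hu (fzero_vout_vin hsupp hne)
      exact (vin_vout_pos_of_vout_vin hdag hsupp hcons hu) (ih u huv)
  have hvoutz : ∀ v : V, f (voutF v, fsnk) = 0 ∧ ∀ u : V, f (voutF v, vinF u) = 0 := by
    intro v
    have hc := hcons (voutF v) (by simp [voutF, fsrc]) (by simp [voutF, fsnk])
    rw [inflow_vout hsupp, outflow_vout hsupp, hmid v] at hc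
    constructor
    · omega
    · intro u
      have hle : f (voutF v, vinF u) ≤ ∑ w : V, f (voutF v, vinF w) :=
        Finset.single_le_sum (f := fun w => f (voutF v, vinF w))
          (fun w _ => Nat.zero_le _) (Finset.mem_univ u)
      omega
  intro e
  by_cases he : e ∈ (redNet E).E
  · rcases mem_redE.1 he with ⟨v, rfl⟩ | ⟨v, rfl⟩ | ⟨v, rfl⟩ | ⟨a, b, hab, rfl⟩
    · exact hz v
    · exact (hvoutz v).1
    · exact hmid v
    · exact (hvoutz a).2 b
  · exact hsupp e he

lemma extract : ∀ v : V, f (vinF v, voutF v) ≠ 0 →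
    ∃ p : List V, p.head? = some v ∧ p.Chain' (edgeRel E) ∧
      (∀ w ∈ p, f (vinF w, voutF w) ≠ 0) ∧
      (∀ e ∈ pathEdges p, f (voutF e.1, vinF e.2) ≠ 0) ∧
      ∃ z, p.getLast? = some z ∧ f (voutF z, fsnk) ≠ 0 := by
  intro v
  induction v using (wf_of_dag' hdag).induction with
  | _ v ih =>
    intro hv
    have hc := hcons (voutF v) (by simp [voutF, fsrc]) (by simp [voutF, fsnk])
    rw [inflow_vout hsupp, outflow_vout hsupp] at hc
    by_cases ht : f (voutF v, fsnk) ≠ 0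
    · refine ⟨[v], rfl, List.isChain_singleton v, ?_, ?_, v, rfl, ht⟩
      · intro w hw
        rw [List.mem_singleton] at hw
        subst hw; exact hv
      · intro e he
        simp [pathEdges_single] at he
    · push_neg at ht
      rw [ht, zero_add] at hc
      have : ∃ u ∈ (univ : Finset V), f (voutF v, vinF u) ≠ 0 := by
        by_contra hno
        push_neg at hno
        rw [Finset.sum_eq_zero (fun u hu => hno u hu)] at hc
        exact hv hc
      obtain ⟨u, -, hu⟩ := this
      have huv : (v, u) ∈ E := by
        by_contra hne
        exact hu (fzero_vout_vin hsupp hne)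
      have hu' : f (vinF u, voutF u) ≠ 0 := by
        have hcu := hcons (vinF u) (by simp [vinF, fsrc]) (by simp [vinF, fsnk])
        rw [inflow_vin hsupp, outflow_vin hsupp] at hcu
        have hle : f (voutF v, vinF u) ≤ ∑ w : V, f (voutF w, vinF u) :=
          Finset.single_le_sum (f := fun w => f (voutF w, vinF u))
            (fun w _ => Nat.zero_le _) (Finset.mem_univ v)
        omega
      obtain ⟨p', hhead, hchain, hmem, hedge, z, hlast, hz⟩ := ih u huv hu'
      obtain ⟨rest, rfl⟩ : ∃ rest, p' = u :: rest := by
        cases p' with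
        | nil => simp at hhead
        | cons a rest =>
          rw [List.head?_cons, Option.some.injEq] at hhead
          exact ⟨rest, by rw [hhead]⟩
      refine ⟨v :: u :: rest, rfl, ?_, ?_, ?_, z, ?_, hz⟩
      · rw [List.Chain', List.isChain_cons_cons]
        exact ⟨huv, hchain⟩
      · intro w hw
        rcases List.mem_cons.1 hw with rfl | hw
        · exact hv
        · exact hmem w hw
      · intro e he
        rw [pathEdges_cons_cons, List.mem_cons] at he
        rcases he with rfl | he
        · exact hu
        · exact hedge e he
      · rw [List.getLast?_cons_cons]
        exact hlast

end ZeroExtract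
end Aux6
section Aux7
set_option linter.unusedSectionVars false
variable {V : Type*} [Fintype V] [DecidableEq V] {E : Finset (V × V)}
open Finset

lemma pathFlow_zero : ∀ e : FR V × FR V, pathFlow (0 : Multiset (List V)) e = 0 := by
  rintro ⟨(a | a) | (_ | _), (b | b) | (_ | _)⟩ <;>
    simp [pathFlow, Multiset.countP_zero]

lemma countP_single (p : List V) (q : List V → Prop) [DecidablePred q] :
    Multiset.countP q ({p} : Multiset (List V)) = if q p then 1 else 0 := by
  rw [show ({p} : Multiset (List V)) = p ::ₘ 0 from rfl, Multiset.countP_cons,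
    Multiset.countP_zero, zero_add]

lemma pathFlow_cons (p : List V) (P : Multiset (List V)) :
    ∀ e : FR V × FR V, pathFlow (p ::ₘ P) e = pathFlow P e + pathFlow {p} e := by
  rintro ⟨(a | a) | (_ | _), (b | b) | (_ | _)⟩ <;> try rfl
  · show (if a = b then Multiset.countP (fun q => a ∈ q) (p ::ₘ P) else 0)
      = (if a = b then Multiset.countP (fun q => a ∈ q) P else 0)
        + (if a = b then Multiset.countP (fun q => a ∈ q) {p} else 0)
    by_cases hab : a = b <;> simp [hab, Multiset.countP_cons, countP_single]
  · show Multiset.countP (fun q => (a, b) ∈ pathEdges q) (p ::ₘ P)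
      = Multiset.countP (fun q => (a, b) ∈ pathEdges q) P
        + Multiset.countP (fun q => (a, b) ∈ pathEdges q) {p}
    rw [Multiset.countP_cons, countP_single]
  · show Multiset.countP (fun q => q.getLast? = some a) (p ::ₘ P)
      = Multiset.countP (fun q => q.getLast? = some a) P
        + Multiset.countP (fun q => q.getLast? = some a) {p}
    rw [Multiset.countP_cons, countP_single]
  · show Multiset.countP (fun q => q.head? = some b) (p ::ₘ P)
      = Multiset.countP (fun q => q.head? = some b) P
        + Multiset.countP (fun q => q.head? = some b) {p}
    rw [Multiset.countP_cons, countP_single]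

lemma decomp (hdag : IsDAG (edgeRel E)) : ∀ (n : ℕ) (f : FR V × FR V → ℕ),
    (∑ e : FR V × FR V, f e) ≤ n →
    (∀ e ∉ (redNet E).E, f e = 0) →
    (∀ x : FR V, x ≠ fsrc → x ≠ fsnk →
      (∑ u : FR V, f (u, x)) = ∑ u : FR V, f (x, u)) →
    ∃ P : Multiset (List V), (∀ p ∈ P, IsPathOn (edgeRel E) p) ∧ ∀ e, pathFlow P e = f e := by
  intro n
  induction n with
  | zero =>
    intro f hsum hsupp hcons
    refine ⟨0, by simp, fun e => ?_⟩
    have hf : f e = 0 := by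
      have := Finset.sum_eq_zero_iff.1 (Nat.le_zero.1 hsum) e (Finset.mem_univ e)
      exact this
    rw [hf, pathFlow_zero]
  | succ n ih =>
    intro f hsum hsupp hcons
    by_cases hz : ∀ v : V, f (fsrc, vinF v) = 0
    · exact ⟨0, by simp, fun e => by rw [flow_zero hdag hsupp hcons hz e, pathFlow_zero]⟩
    · push_neg at hz
      obtain ⟨v₀, hv₀⟩ := hz
      have hmid : f (vinF v₀, voutF v₀) ≠ 0 := vin_vout_pos_of_src hdag hsupp hcons hv₀
      obtain ⟨p, hhead, hchain, hmem, hedge, z, hlast, hzf⟩ :=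
        extract hdag hsupp hcons v₀ hmid
      have hpne : p ≠ [] := by
        intro h; rw [h] at hhead; simp at hhead
      have hnodup : p.Nodup := nodup_of_chain' hdag hchain
      have hpath : IsPathOn (edgeRel E) p := ⟨hpne, hchain, hnodup⟩
      set g := pathFlow ({p} : Multiset (List V)) with hg
      have hkey : ∀ e, g e ≤ f e := by
        rintro ⟨(a | a) | (_ | _), (b | b) | (_ | _)⟩ <;>
          first
          | exact Nat.zero_le _
          | skip
        · -- (vin a, vout b)
          show (if a = b then Multiset.countP (fun q => a ∈ q) {p} else 0) ≤ _
          by_cases hab : a = b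
          · subst hab
            rw [if_pos rfl, countP_single]
            by_cases hap : a ∈ p
            · rw [if_pos hap]
              exact Nat.one_le_iff_ne_zero.2 (hmem a hap)
            · rw [if_neg hap]; exact Nat.zero_le _
          · rw [if_neg hab]; exact Nat.zero_le _
        · -- (vout a, vin b)
          show Multiset.countP (fun q => (a, b) ∈ pathEdges q) {p} ≤ _
          rw [countP_single]
          by_cases hab : (a, b) ∈ pathEdges p
          · rw [if_pos hab]
            exact Nat.one_le_iff_ne_zero.2 (hedge (a, b) hab)
          · rw [if_neg hab]; exact Nat.zero_le _
        · -- (vout a, fsnk)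
          show Multiset.countP (fun q => q.getLast? = some a) {p} ≤ _
          rw [countP_single]
          by_cases hab : p.getLast? = some a
          · rw [if_pos hab]
            have : a = z := by rw [hab] at hlast; exact (Option.some.injEq _ _ ▸ hlast : _)
            subst this
            exact Nat.one_le_iff_ne_zero.2 hzf
          · rw [if_neg hab]; exact Nat.zero_le _
        · -- (fsrc, vin b)
          show Multiset.countP (fun q => q.head? = some b) {p} ≤ _
          rw [countP_single]
          by_cases hab : p.head? = some b
          · rw [if_pos hab]
            have : v₀ = b := by rw [hhead] at hab; exact Option.some.inj hab
            subst this
            exact Nat.one_le_iff_ne_zero.2 hv₀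
          · rw [if_neg hab]; exact Nat.zero_le _
      set f' := fun e => f e - g e with hf'
      have hfg : ∀ e, f e = f' e + g e := fun e => (Nat.sub_add_cancel (hkey e)).symm
      have hsupp' : ∀ e ∉ (redNet E).E, f' e = 0 := by
        intro e he
        have := hsupp e he
        have := hkey e
        simp only [hf']
        omega
      have hgcons := pathFlow_conserv ({p} : Multiset (List V))
        (fun q hq => by rw [Multiset.mem_singleton] at hq; subst hq; exact hnodup)
      have hcons' : ∀ x : FR V, x ≠ fsrc → x ≠ fsnk →
          (∑ u : FR V, f' (u, x)) = ∑ u : FR V, f' (x, u) := by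
        intro x hs ht
        have h1 := hcons x hs ht
        have h2 : (∑ u : FR V, g (u, x)) = ∑ u : FR V, g (x, u) := hgcons x hs ht
        have e1 : (∑ u : FR V, f (u, x)) = (∑ u : FR V, f' (u, x)) + ∑ u : FR V, g (u, x) := by
          rw [← Finset.sum_add_distrib]
          exact Finset.sum_congr rfl (fun u _ => hfg (u, x))
        have e2 : (∑ u : FR V, f (x, u)) = (∑ u : FR V, f' (x, u)) + ∑ u : FR V, g (x, u) := by
          rw [← Finset.sum_add_distrib]
          exact Finset.sum_congr rfl (fun u _ => hfg (x, u))
        omega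
      have hsum' : (∑ e : FR V × FR V, f' e) ≤ n := by
        have e3 : (∑ e : FR V × FR V, f e)
            = (∑ e : FR V × FR V, f' e) + ∑ e : FR V × FR V, g e := by
          rw [← Finset.sum_add_distrib]
          exact Finset.sum_congr rfl (fun e _ => hfg e)
        have hg1 : 1 ≤ ∑ e : FR V × FR V, g e := by
          have : g (fsrc, vinF v₀) = 1 := by
            show Multiset.countP (fun q => q.head? = some v₀) {p} = 1
            rw [countP_single, if_pos hhead]
          calc 1 = g (fsrc, vinF v₀) := this.symm
            _ ≤ _ := Finset.single_le_sum (f := fun e => g e)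
                (fun e _ => Nat.zero_le _) (Finset.mem_univ _)
        omega
      obtain ⟨P', hP', hPf⟩ := ih f' hsum' hsupp' hcons'
      refine ⟨p ::ₘ P', ?_, ?_⟩
      · intro q hq
        rcases Multiset.mem_cons.1 hq with rfl | hq
        · exact hpath
        · exact hP' q hq
      · intro e
        rw [pathFlow_cons, hPf e, ← hfg e]

end Aux7
/-- correspondence between path covers of a DAG and flows of its flow
reduction; in particular the width equals the minimum flow size. -/
theorem stmt_5 {V : Type*} [Fintype V] [DecidableEq V] (E : Finset (V × V))
    (hdag : IsDAG (edgeRel E)) :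
    (∀ P : Multiset (List V), IsPathCover (edgeRel E) P →
        ∃ f, IsFlow (redNet E) f ∧ flowSize (redNet E) f = Multiset.card P) ∧
    (∀ f, IsFlow (redNet E) f →
        ∃ P : Multiset (List V), IsPathCover (edgeRel E) P ∧
          (Multiset.card P : ℤ) = flowSize (redNet E) f) ∧
    (gwidth (edgeRel E) : ℤ)
      = sInf {z : ℤ | ∃ f, IsFlow (redNet E) f ∧ flowSize (redNet E) f = z} := by
  have dir1 : ∀ P : Multiset (List V), IsPathCover (edgeRel E) P →
      IsFlow (redNet E) (pathFlow P)
        ∧ flowSize (redNet E) (pathFlow P) = Multiset.card P := by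
    intro P hP
    have hpaths := hP.1
    have hnodup : ∀ p ∈ P, p.Nodup := fun p hp => (hpaths p hp).2.2
    have hne : ∀ p ∈ P, p ≠ [] := fun p hp => (hpaths p hp).1
    refine ⟨⟨pathFlow_support P hpaths, ?_, ?_⟩, flowSize_pathFlow P hne⟩
    · intro e he
      rcases mem_redE.1 he with ⟨v, rfl⟩ | ⟨v, rfl⟩ | ⟨v, rfl⟩ | ⟨a, b, hab, rfl⟩
      · exact Nat.zero_le _
      · exact Nat.zero_le _
      · show redD (vinF v, voutF v) ≤ pathFlow P (vinF v, voutF v)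
        have h1 : redD (vinF v, voutF v) = 1 := by simp [redD, vinF, voutF]
        rw [h1, pathFlow_vin_vout, if_pos rfl]
        obtain ⟨p, hp, hv⟩ := hP.2 v
        exact Multiset.countP_pos.2 ⟨p, hp, hv⟩
      · exact Nat.zero_le _
    · intro x hs ht
      exact pathFlow_conserv P hnodup x hs ht
  have dir2 : ∀ f, IsFlow (redNet E) f →
      ∃ P : Multiset (List V), IsPathCover (edgeRel E) P ∧
        (Multiset.card P : ℤ) = flowSize (redNet E) f := by
    intro f hf
    obtain ⟨hsupp, hdem, hcons⟩ := hf
    obtain ⟨P, hP, hPf⟩ := decomp hdag (∑ e : FR V × FR V, f e) f le_rfl hsupp hcons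
    have cover : ∀ v : V, ∃ p ∈ P, v ∈ p := by
      intro v
      have hd := hdem _ (vin_vout_mem v)
      have h1 : (redNet E).d (vinF v, voutF v) = 1 := by
        show redD (vinF v, voutF v) = 1
        simp [redD, vinF, voutF]
      rw [h1] at hd
      have h2 := hPf (vinF v, voutF v)
      rw [pathFlow_vin_vout, if_pos rfl] at h2
      exact Multiset.countP_pos.1 (by omega)
    have hfeq : pathFlow P = f := funext hPf
    refine ⟨P, ⟨hP, cover⟩, ?_⟩
    rw [← hfeq]
    exact (flowSize_pathFlow P (fun p hp => (hP p hp).1)).symm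
  refine ⟨fun P hP => ⟨pathFlow P, (dir1 P hP).1, (dir1 P hP).2⟩, dir2, ?_⟩
  set S : Set ℕ := {n | ∃ P : Multiset (List V),
    IsPathCover (edgeRel E) P ∧ Multiset.card P = n} with hS
  set Z : Set ℤ := {z | ∃ f, IsFlow (redNet E) f ∧ flowSize (redNet E) f = z} with hZ
  have hSne : S.Nonempty := by
    refine ⟨Multiset.card (Multiset.map (fun v => [v]) (univ : Finset V).val),
      Multiset.map (fun v => [v]) (univ : Finset V).val, ⟨?_, ?_⟩, rfl⟩
    · intro p hp
      obtain ⟨v, -, rfl⟩ := Multiset.mem_map.1 hp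
      exact ⟨List.cons_ne_nil _ _, List.isChain_singleton v, List.nodup_singleton v⟩
    · intro v
      exact ⟨[v], Multiset.mem_map.2 ⟨v, Finset.mem_univ v, rfl⟩, List.mem_singleton_self v⟩
  have hmem : sInf S ∈ S := Nat.sInf_mem hSne
  obtain ⟨P₀, hP₀, hcard₀⟩ := hmem
  have hmemZ : ((sInf S : ℕ) : ℤ) ∈ Z :=
    ⟨pathFlow P₀, (dir1 P₀ hP₀).1, by rw [(dir1 P₀ hP₀).2, hcard₀]⟩
  have hlb : ∀ z ∈ Z, ((sInf S : ℕ) : ℤ) ≤ z := by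
    rintro z ⟨f, hf, rfl⟩
    obtain ⟨P, hP, hcard⟩ := dir2 f hf
    rw [← hcard]
    exact_mod_cast Nat.sInf_le (⟨P, hP, rfl⟩ : Multiset.card P ∈ S)
  have : gwidth (edgeRel E) = sInf S := rfl
  rw [this]
  exact le_antisymm (le_csInf ⟨_, hmemZ⟩ hlb) (csInf_le ⟨_, hlb⟩ hmemZ)
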